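/- For all real x with 0 ≤ x ≤ 1, one has 2³²·(f((1+x)/256) − f((1−x)/256)) = (583/2679075)x + (19/6075)x³ + (1/135)x⁵ + (1/315)x⁷. -/

import Mathlib

open scoped BigOperators

set_option maxHeartbeats 2000000 in
theorem fabius_stmt_7 (f : ℝ → ℝ)
    (hcont : ContinuousOn f (Set.Ici 0))
    (hsym : ∀ x : ℝ, 0 ≤ x → x ≤ 1 → f x + f (1 - x) = 1)
    (hint : ∀ x : ℝ, 0 ≤ x → f x = ∫ t in (0:ℝ)..(2 * x), f t) :
    ∀ x : ℝ, 0 ≤ x → x ≤ 1 →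
      2 ^ 32 * (f ((1 + x) / 256) - f ((1 - x) / 256)) = (583 / 2679075) * x + (19 / 6075) * x ^ 3 + (1 / 135) * x ^ 5 + (1 / 315) * x ^ 7 := by
  have hf0 : f 0 = 0 := by simpa using hint 0 le_rfl
  -- derivative of f at positive points
  have hf' : ∀ x : ℝ, 0 < x → HasDerivAt f (2 * f (2 * x)) x := by
    intro x hx
    have hFd : HasDerivAt (fun u : ℝ => ∫ t in (0:ℝ)..u, f t) (f (2 * x)) (2 * x) := by
      apply intervalIntegral.integral_hasDerivAt_right
      · apply ContinuousOn.intervalIntegrable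
        apply hcont.mono
        rw [Set.uIcc_of_le (by linarith)]
        exact fun y hy => hy.1
      · exact (hcont.mono (Set.Ioi_subset_Ici le_rfl)).stronglyMeasurableAtFilter isOpen_Ioi
          (2 * x) (by simpa using by linarith : (2*x) ∈ Set.Ioi (0:ℝ))
      · exact hcont.continuousAt (Ici_mem_nhds (by linarith))
    have hinner : HasDerivAt (fun u : ℝ => 2 * u) 2 x := by
      simpa using (hasDerivAt_id x).const_mul (2:ℝ)
    have h2 : HasDerivAt (fun u : ℝ => ∫ t in (0:ℝ)..(2 * u), f t) (f (2 * x) * 2) x := by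
      simpa [Function.comp_def] using hFd.comp x hinner
    have h3 := h2.congr_of_eventuallyEq
      (by filter_upwards [Ioi_mem_nhds hx] with y hy using hint y hy.le)
    simpa [mul_comm] using h3
  -- helper derivatives
  have hplus : ∀ c d t : ℝ, 0 < c + t → d = 2 * c + 2 * t →
      HasDerivAt (fun s => f (c + s)) (2 * f d) t := by
    intro c d t h hd
    have h1 : HasDerivAt (fun s : ℝ => c + s) 1 t := (hasDerivAt_id t).const_add c
    have h2 := (hf' (c + t) h).comp t h1
    have e : 2 * (c + t) = d := by rw [hd]; ring
    rw [e] at h2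
    simpa [Function.comp_def] using h2
  have hminus : ∀ c d t : ℝ, 0 < c - t → d = 2 * c - 2 * t →
      HasDerivAt (fun s => f (c - s)) (-(2 * f d)) t := by
    intro c d t h hd
    have h1 : HasDerivAt (fun s : ℝ => c - s) (-1) t := (hasDerivAt_id t).const_sub c
    have h2 := (hf' (c - t) h).comp t h1
    have e : 2 * (c - t) = d := by rw [hd]; ring
    rw [e] at h2
    have h3 : HasDerivAt (fun s => f (c - s)) (2 * f d * (-1)) t := by
      simpa [Function.comp_def] using h2
    simpa using h3
  have hhp : ∀ c d t : ℝ, 0 < c + t → d = c + t →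
      HasDerivAt (fun s => f ((c + s) / 2)) (f d) t := by
    intro c d t h hd
    have h1 : HasDerivAt (fun s : ℝ => (c + s) / 2) (1 / 2) t :=
      ((hasDerivAt_id t).const_add c).div_const 2
    have h2 := (hf' ((c + t) / 2) (by linarith)).comp t h1
    have e : 2 * ((c + t) / 2) = d := by rw [hd]; ring
    rw [e] at h2
    have h3 : HasDerivAt (fun s => f ((c + s) / 2)) (2 * f d * (1 / 2)) t := by
      simpa [Function.comp_def] using h2
    have e2 : 2 * f d * (1 / 2) = f d := by ring
    rwa [e2] at h3
  have hhm : ∀ c d t : ℝ, 0 < c - t → d = c - t →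
      HasDerivAt (fun s => f ((c - s) / 2)) (-(f d)) t := by
    intro c d t h hd
    have h1 : HasDerivAt (fun s : ℝ => (c - s) / 2) (-1 / 2) t :=
      ((hasDerivAt_id t).const_sub c).div_const 2
    have h2 := (hf' ((c - t) / 2) (by linarith)).comp t h1
    have e : 2 * ((c - t) / 2) = d := by rw [hd]; ring
    rw [e] at h2
    have h3 : HasDerivAt (fun s => f ((c - s) / 2)) (2 * f d * (-1 / 2)) t := by
      simpa [Function.comp_def] using h2
    have e2 : 2 * f d * (-1 / 2) = -(f d) := by ring
    rwa [e2] at h3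
  -- continuity helpers
  have hcp : ∀ c L : ℝ, 0 ≤ c → ContinuousOn (fun t => f (c + t)) (Set.Icc 0 L) := by
    intro c L hc
    exact hcont.comp (continuous_const.add continuous_id).continuousOn
      (fun t ht => by simp only [Set.mem_Ici]; have := ht.1; positivity)
  have hcm : ∀ c L : ℝ, L ≤ c → ContinuousOn (fun t => f (c - t)) (Set.Icc 0 L) := by
    intro c L hLc
    exact hcont.comp (continuous_const.sub continuous_id).continuousOn
      (fun t ht => by simp only [Set.mem_Ici, id]; have h1 := ht.2; simp; linarith)
  have hcp2 : ∀ c L : ℝ, 0 ≤ c → ContinuousOn (fun t => f ((c + t) / 2)) (Set.Icc 0 L) := by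
    intro c L hc
    exact hcont.comp ((continuous_const.add continuous_id).div_const 2).continuousOn
      (fun t ht => by simp only [Set.mem_Ici]; have := ht.1; positivity)
  have hcm2 : ∀ c L : ℝ, L ≤ c → ContinuousOn (fun t => f ((c - t) / 2)) (Set.Icc 0 L) := by
    intro c L hLc
    exact hcont.comp ((continuous_const.sub continuous_id).div_const 2).continuousOn
      (fun t ht => by simp only [Set.mem_Ici, id]; have h1 := ht.2; simp; linarith)
  -- constancy
  have key : ∀ (g : ℝ → ℝ) (L : ℝ), ContinuousOn g (Set.Icc 0 L) →
      (∀ t ∈ Set.Ico (0:ℝ) L, HasDerivAt g 0 t) → ∀ t ∈ Set.Icc (0:ℝ) L, g t = g 0 :=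
    fun g L hgc hgd t ht =>
      constant_of_has_deriv_right_zero hgc (fun s hs => (hgd s hs).hasDerivWithinAt) t ht
  -- the chain
  have h7 : ∀ s : ℝ, 0 ≤ s → s ≤ 1/2 → f (1/2 + s) + f (1/2 - s) = 1 := by
    intro s h0 h1
    have h := hsym (1/2 - s) (by linarith) (by linarith)
    have e : (1:ℝ) - (1/2 - s) = 1/2 + s := by ring
    rw [e] at h
    linarith
  have h6 : ∀ s : ℝ, 0 ≤ s → s ≤ 1/4 → f (1/4 + s) - f (1/4 - s) = 2 * s := by
    have hk := key (fun t => f (1/4 + t) - f (1/4 - t) - 2 * t) (1/4)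
      (((hcp (1/4) (1/4) (by norm_num)).sub (hcm (1/4) (1/4) (by norm_num))).sub
        (Continuous.continuousOn (by fun_prop)))
      (by
        intro t ht
        obtain ⟨ht0, ht1⟩ := ht
        have Hp := hplus (1/4) (1/2 + 2*t) t (by linarith) (by ring)
        have Hm := hminus (1/4) (1/2 - 2*t) t (by linarith) (by ring)
        have Hq : HasDerivAt (fun s : ℝ => 2 * s) (2 * 1) t := (hasDerivAt_id' t).const_mul 2
        have H := (Hp.sub Hm).sub Hq
        refine H.congr_deriv (Eq.symm ?_)
        have h := h7 (2*t) (by linarith) (by linarith)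
        linear_combination (-2 : ℝ) * h)
    intro s hs0 hs1
    have h1 := hk s ⟨hs0, hs1⟩
    norm_num at h1
    linarith
  have h5 : ∀ s : ℝ, 0 ≤ s → s ≤ 1/8 → f (1/8 + s) + f (1/8 - s) = 2 * f (1/8) + 4 * s^2 := by
    have hk := key (fun t => f (1/8 + t) + f (1/8 - t) - (2 * f (1/8) + 4 * t^2)) (1/8)
      (((hcp (1/8) (1/8) (by norm_num)).add (hcm (1/8) (1/8) (by norm_num))).sub
        (Continuous.continuousOn (by fun_prop)))
      (by
        intro t ht
        obtain ⟨ht0, ht1⟩ := ht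
        have Hp := hplus (1/8) (1/4 + 2*t) t (by linarith) (by ring)
        have Hm := hminus (1/8) (1/4 - 2*t) t (by linarith) (by ring)
        have Hq := (hasDerivAt_const t (2 * f (1/8))).add ((hasDerivAt_pow 2 t).const_mul (4:ℝ))
        have H := (Hp.add Hm).sub Hq
        refine H.congr_deriv (Eq.symm ?_)
        have h := h6 (2*t) (by linarith) (by linarith)
        linear_combination (-2 : ℝ) * h)
    intro s hs0 hs1
    have h1 := hk s ⟨hs0, hs1⟩
    norm_num at h1
    linarith
  have hf8 : f (1/8) = 1/288 := by
    have hk := key (fun t => f ((1/8 + t)/2) - f ((1/8 - t)/2) - (2 * f (1/8) * t + 4/3 * t^3)) (1/8)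
      (((hcp2 (1/8) (1/8) (by norm_num)).sub (hcm2 (1/8) (1/8) (by norm_num))).sub
        (Continuous.continuousOn (by fun_prop)))
      (by
        intro t ht
        obtain ⟨ht0, ht1⟩ := ht
        have Hp := hhp (1/8) (1/8 + t) t (by linarith) (by ring)
        have Hm := hhm (1/8) (1/8 - t) t (by linarith) (by ring)
        have Hq := ((hasDerivAt_id' t).const_mul (2 * f (1/8))).add
          ((hasDerivAt_pow 3 t).const_mul ((4:ℝ)/3))
        have H := (Hp.sub Hm).sub Hq
        refine H.congr_deriv (Eq.symm ?_)
        have h := h5 t (by linarith) (by linarith)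
        linear_combination (-1 : ℝ) * h)
    have h1 := hk (1/8) ⟨by norm_num, le_rfl⟩
    norm_num [hf0] at h1
    linarith
  have h4 : ∀ s : ℝ, 0 ≤ s → s ≤ 1/16 →
      f (1/16 + s) - f (1/16 - s) = 1/72 * s + 32/3 * s^3 := by
    have hk := key (fun t => f (1/16 + t) - f (1/16 - t) - (1/72 * t + 32/3 * t^3)) (1/16)
      (((hcp (1/16) (1/16) (by norm_num)).sub (hcm (1/16) (1/16) (by norm_num))).sub
        (Continuous.continuousOn (by fun_prop)))
      (by
        intro t ht
        obtain ⟨ht0, ht1⟩ := ht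
        have Hp := hplus (1/16) (1/8 + 2*t) t (by linarith) (by ring)
        have Hm := hminus (1/16) (1/8 - 2*t) t (by linarith) (by ring)
        have Hq := ((hasDerivAt_id' t).const_mul ((1:ℝ)/72)).add
          ((hasDerivAt_pow 3 t).const_mul ((32:ℝ)/3))
        have H := (Hp.sub Hm).sub Hq
        refine H.congr_deriv (Eq.symm ?_)
        have h := h5 (2*t) (by linarith) (by linarith)
        linear_combination (-2 : ℝ) * h - 4 * hf8)
    intro s hs0 hs1
    have h1 := hk s ⟨hs0, hs1⟩
    norm_num at h1
    linarith
  have h3 : ∀ s : ℝ, 0 ≤ s → s ≤ 1/32 →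
      f (1/32 + s) + f (1/32 - s) = 2 * f (1/32) + 1/36 * s^2 + 128/3 * s^4 := by
    have hk := key (fun t => f (1/32 + t) + f (1/32 - t) -
        (2 * f (1/32) + 1/36 * t^2 + 128/3 * t^4)) (1/32)
      (((hcp (1/32) (1/32) (by norm_num)).add (hcm (1/32) (1/32) (by norm_num))).sub
        (Continuous.continuousOn (by fun_prop)))
      (by
        intro t ht
        obtain ⟨ht0, ht1⟩ := ht
        have Hp := hplus (1/32) (1/16 + 2*t) t (by linarith) (by ring)
        have Hm := hminus (1/32) (1/16 - 2*t) t (by linarith) (by ring)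
        have Hq := ((hasDerivAt_const t (2 * f (1/32))).add
          ((hasDerivAt_pow 2 t).const_mul ((1:ℝ)/36))).add
          ((hasDerivAt_pow 4 t).const_mul ((128:ℝ)/3))
        have H := (Hp.add Hm).sub Hq
        refine H.congr_deriv (Eq.symm ?_)
        have h := h4 (2*t) (by linarith) (by linarith)
        linear_combination (-2 : ℝ) * h)
    intro s hs0 hs1
    have h1 := hk s ⟨hs0, hs1⟩
    norm_num at h1
    linarith
  have hf32 : f (1/32) = 19/33177600 := by
    have hk := key (fun t => f ((1/32 + t)/2) - f ((1/32 - t)/2) -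
        (2 * f (1/32) * t + 1/108 * t^3 + 128/15 * t^5)) (1/32)
      (((hcp2 (1/32) (1/32) (by norm_num)).sub (hcm2 (1/32) (1/32) (by norm_num))).sub
        (Continuous.continuousOn (by fun_prop)))
      (by
        intro t ht
        obtain ⟨ht0, ht1⟩ := ht
        have Hp := hhp (1/32) (1/32 + t) t (by linarith) (by ring)
        have Hm := hhm (1/32) (1/32 - t) t (by linarith) (by ring)
        have Hq := (((hasDerivAt_id' t).const_mul (2 * f (1/32))).add
          ((hasDerivAt_pow 3 t).const_mul ((1:ℝ)/108))).add
          ((hasDerivAt_pow 5 t).const_mul ((128:ℝ)/15))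
        have H := (Hp.sub Hm).sub Hq
        refine H.congr_deriv (Eq.symm ?_)
        have h := h3 t (by linarith) (by linarith)
        linear_combination (-1 : ℝ) * h)
    have h1 := hk (1/32) ⟨by norm_num, le_rfl⟩
    norm_num [hf0] at h1
    linarith
  have h2 : ∀ s : ℝ, 0 ≤ s → s ≤ 1/64 →
      f (1/64 + s) - f (1/64 - s) = 19/8294400 * s + 2/27 * s^3 + 4096/15 * s^5 := by
    have hk := key (fun t => f (1/64 + t) - f (1/64 - t) -
        (19/8294400 * t + 2/27 * t^3 + 4096/15 * t^5)) (1/64)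
      (((hcp (1/64) (1/64) (by norm_num)).sub (hcm (1/64) (1/64) (by norm_num))).sub
        (Continuous.continuousOn (by fun_prop)))
      (by
        intro t ht
        obtain ⟨ht0, ht1⟩ := ht
        have Hp := hplus (1/64) (1/32 + 2*t) t (by linarith) (by ring)
        have Hm := hminus (1/64) (1/32 - 2*t) t (by linarith) (by ring)
        have Hq := (((hasDerivAt_id' t).const_mul ((19:ℝ)/8294400)).add
          ((hasDerivAt_pow 3 t).const_mul ((2:ℝ)/27))).add
          ((hasDerivAt_pow 5 t).const_mul ((4096:ℝ)/15))
        have H := (Hp.sub Hm).sub Hq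
        refine H.congr_deriv (Eq.symm ?_)
        have h := h3 (2*t) (by linarith) (by linarith)
        linear_combination (-2 : ℝ) * h - 4 * hf32)
    intro s hs0 hs1
    have h1 := hk s ⟨hs0, hs1⟩
    norm_num at h1
    linarith
  have h1 : ∀ s : ℝ, 0 ≤ s → s ≤ 1/128 →
      f (1/128 + s) + f (1/128 - s) =
        2 * f (1/128) + 19/4147200 * s^2 + 8/27 * s^4 + 131072/45 * s^6 := by
    have hk := key (fun t => f (1/128 + t) + f (1/128 - t) -
        (2 * f (1/128) + 19/4147200 * t^2 + 8/27 * t^4 + 131072/45 * t^6)) (1/128)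
      (((hcp (1/128) (1/128) (by norm_num)).add (hcm (1/128) (1/128) (by norm_num))).sub
        (Continuous.continuousOn (by fun_prop)))
      (by
        intro t ht
        obtain ⟨ht0, ht1⟩ := ht
        have Hp := hplus (1/128) (1/64 + 2*t) t (by linarith) (by ring)
        have Hm := hminus (1/128) (1/64 - 2*t) t (by linarith) (by ring)
        have Hq := (((hasDerivAt_const t (2 * f (1/128))).add
          ((hasDerivAt_pow 2 t).const_mul ((19:ℝ)/4147200))).add
          ((hasDerivAt_pow 4 t).const_mul ((8:ℝ)/27))).add
          ((hasDerivAt_pow 6 t).const_mul ((131072:ℝ)/45))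
        have H := (Hp.add Hm).sub Hq
        refine H.congr_deriv (Eq.symm ?_)
        have h := h2 (2*t) (by linarith) (by linarith)
        linear_combination (-2 : ℝ) * h)
    intro s hs0 hs1
    have hh := hk s ⟨hs0, hs1⟩
    norm_num at hh
    linarith
  have hf128 : f (1/128) = 583/179789679820800 := by
    have hk := key (fun t => f ((1/128 + t)/2) - f ((1/128 - t)/2) -
        (2 * f (1/128) * t + 19/12441600 * t^3 + 8/135 * t^5 + 131072/315 * t^7)) (1/128)
      (((hcp2 (1/128) (1/128) (by norm_num)).sub (hcm2 (1/128) (1/128) (by norm_num))).sub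
        (Continuous.continuousOn (by fun_prop)))
      (by
        intro t ht
        obtain ⟨ht0, ht1⟩ := ht
        have Hp := hhp (1/128) (1/128 + t) t (by linarith) (by ring)
        have Hm := hhm (1/128) (1/128 - t) t (by linarith) (by ring)
        have Hq := ((((hasDerivAt_id' t).const_mul (2 * f (1/128))).add
          ((hasDerivAt_pow 3 t).const_mul ((19:ℝ)/12441600))).add
          ((hasDerivAt_pow 5 t).const_mul ((8:ℝ)/135))).add
          ((hasDerivAt_pow 7 t).const_mul ((131072:ℝ)/315))
        have H := (Hp.sub Hm).sub Hq
        refine H.congr_deriv (Eq.symm ?_)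
        have h := h1 t (by linarith) (by linarith)
        linear_combination (-1 : ℝ) * h)
    have hh := hk (1/128) ⟨by norm_num, le_rfl⟩
    norm_num [hf0] at hh
    linarith
  have h0 : ∀ s : ℝ, 0 ≤ s → s ≤ 1/256 →
      f (1/256 + s) - f (1/256 - s) =
        583/44947419955200 * s + 19/1555200 * s^3 + 256/135 * s^5 + 16777216/315 * s^7 := by
    have hk := key (fun t => f (1/256 + t) - f (1/256 - t) -
        (583/44947419955200 * t + 19/1555200 * t^3 + 256/135 * t^5 + 16777216/315 * t^7)) (1/256)
      (((hcp (1/256) (1/256) (by norm_num)).sub (hcm (1/256) (1/256) (by norm_num))).sub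
        (Continuous.continuousOn (by fun_prop)))
      (by
        intro t ht
        obtain ⟨ht0, ht1⟩ := ht
        have Hp := hplus (1/256) (1/128 + 2*t) t (by linarith) (by ring)
        have Hm := hminus (1/256) (1/128 - 2*t) t (by linarith) (by ring)
        have Hq := ((((hasDerivAt_id' t).const_mul ((583:ℝ)/44947419955200)).add
          ((hasDerivAt_pow 3 t).const_mul ((19:ℝ)/1555200))).add
          ((hasDerivAt_pow 5 t).const_mul ((256:ℝ)/135))).add
          ((hasDerivAt_pow 7 t).const_mul ((16777216:ℝ)/315))
        have H := (Hp.sub Hm).sub Hq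
        refine H.congr_deriv (Eq.symm ?_)
        have h := h1 (2*t) (by linarith) (by linarith)
        linear_combination (-2 : ℝ) * h - 4 * hf128)
    intro s hs0 hs1
    have hh := hk s ⟨hs0, hs1⟩
    norm_num at hh
    linarith
  intro x hx0 hx1
  have e1 : (1 + x)/256 = 1/256 + x/256 := by ring
  have e2 : (1 - x)/256 = 1/256 - x/256 := by ring
  rw [e1, e2]
  have h := h0 (x/256) (by linarith) (by linarith)
  linear_combination (4294967296:ℝ) * h
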